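/- Let i_j := ∫_ℝ r^{2j} √(1 + r²) μ(r) dr for integers j ≥ 0, where μ(r) := (2π)^{−1/2} e^{−r²/2}. Then i_2 = i_0 + 3 i_1, i_3 = 5 i_0 + 18 i_1, i_4 = 40 i_0 + 141 i_1, i_5 = 395 i_0 + 1395 i_1, and i_6 = 4705 i_0 + 16614 i_1. -/

import Mathlib

open MeasureTheory

/-- The standard Gaussian density `μ(r) = (2π)^{-1/2} e^{-r²/2}`. -/
noncomputable def gaussDensity (r : ℝ) : ℝ :=
  (Real.sqrt (2 * Real.pi))⁻¹ * Real.exp (-r ^ 2 / 2)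

/-- `i_j = ∫_ℝ r^{2j} √(1 + r²) μ(r) dr`. -/
noncomputable def iGauss (j : ℕ) : ℝ :=
  ∫ r : ℝ, r ^ (2 * j) * Real.sqrt (1 + r ^ 2) * gaussDensity r

lemma integrable_aux (n : ℕ) :
    Integrable (fun r : ℝ => r ^ n * Real.sqrt (1 + r ^ 2) * gaussDensity r) := by
  have h1 : ∀ m : ℕ, Integrable (fun r : ℝ => |r| ^ m * Real.exp (-(2⁻¹) * r ^ 2)) := by
    intro m
    have h := integrable_rpow_mul_exp_neg_mul_sq (by norm_num : (0:ℝ) < 2⁻¹)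
        (s := m) (lt_of_lt_of_le neg_one_lt_zero (Nat.cast_nonneg m))
    have h2 : Integrable (fun x : ℝ => x ^ m * Real.exp (-(2⁻¹) * x ^ 2)) :=
      h.congr (by filter_upwards with x; rw [Real.rpow_natCast])
    exact h2.abs.congr (by
      filter_upwards with x
      rw [abs_mul, abs_pow, abs_of_nonneg (Real.exp_pos _).le])
  have hg : Integrable (fun r : ℝ => (Real.sqrt (2 * Real.pi))⁻¹ *
      (|r| ^ n * Real.exp (-(2⁻¹) * r ^ 2) + |r| ^ (n + 1) * Real.exp (-(2⁻¹) * r ^ 2))) :=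
    ((h1 n).add (h1 (n + 1))).const_mul _
  refine hg.mono' ?_ ?_
  · apply Continuous.aestronglyMeasurable
    unfold gaussDensity
    fun_prop
  · filter_upwards with r
    have hc : (0:ℝ) ≤ (Real.sqrt (2 * Real.pi))⁻¹ := by positivity
    have hsq : Real.sqrt (1 + r ^ 2) ≤ 1 + |r| := by
      rw [show (1:ℝ) + |r| = Real.sqrt ((1 + |r|) ^ 2) from
        (Real.sqrt_sq (by positivity)).symm]
      apply Real.sqrt_le_sqrt
      nlinarith [abs_nonneg r, sq_abs r]
    have he : Real.exp (-r ^ 2 / 2) = Real.exp (-(2⁻¹) * r ^ 2) := by ring_nf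
    have hexp : (0:ℝ) ≤ Real.exp (-(2⁻¹) * r ^ 2) := (Real.exp_pos _).le
    rw [Real.norm_eq_abs]
    unfold gaussDensity
    rw [he]
    have h1 : |r ^ n * Real.sqrt (1 + r ^ 2) *
        ((Real.sqrt (2 * Real.pi))⁻¹ * Real.exp (-(2⁻¹) * r ^ 2))|
        = |r| ^ n * Real.sqrt (1 + r ^ 2) *
        ((Real.sqrt (2 * Real.pi))⁻¹ * Real.exp (-(2⁻¹) * r ^ 2)) := by
      rw [abs_mul, abs_mul, abs_pow]
      congr 1
      · congr 1
        exact abs_of_nonneg (Real.sqrt_nonneg _)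
      · exact abs_of_nonneg (by positivity)
    rw [h1]
    have : |r| ^ n * Real.sqrt (1 + r ^ 2) ≤ |r| ^ n + |r| ^ (n + 1) := by
      calc |r| ^ n * Real.sqrt (1 + r ^ 2) ≤ |r| ^ n * (1 + |r|) := by
            exact mul_le_mul_of_nonneg_left hsq (by positivity)
        _ = |r| ^ n + |r| ^ (n + 1) := by ring
    calc |r| ^ n * Real.sqrt (1 + r ^ 2) *
          ((Real.sqrt (2 * Real.pi))⁻¹ * Real.exp (-(2⁻¹) * r ^ 2))
        = (Real.sqrt (2 * Real.pi))⁻¹ *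
          ((|r| ^ n * Real.sqrt (1 + r ^ 2)) * Real.exp (-(2⁻¹) * r ^ 2)) := by ring
      _ ≤ (Real.sqrt (2 * Real.pi))⁻¹ *
          ((|r| ^ n + |r| ^ (n + 1)) * Real.exp (-(2⁻¹) * r ^ 2)) :=
          mul_le_mul_of_nonneg_left (mul_le_mul_of_nonneg_right this hexp) hc
      _ = (Real.sqrt (2 * Real.pi))⁻¹ *
          (|r| ^ n * Real.exp (-(2⁻¹) * r ^ 2) + |r| ^ (n + 1) * Real.exp (-(2⁻¹) * r ^ 2)) := by
          ring

lemma hasDerivAt_gauss (r : ℝ) : HasDerivAt gaussDensity (-r * gaussDensity r) r := by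
  have h1 : HasDerivAt (fun x : ℝ => -x ^ 2 / 2) (-r) r := by
    have := ((hasDerivAt_pow 2 r).neg).div_const 2
    refine this.congr_deriv ?_
    ring
  have h2 := (Real.hasDerivAt_exp (-r ^ 2 / 2)).comp r h1
  have h3 := h2.const_mul (Real.sqrt (2 * Real.pi))⁻¹
  unfold gaussDensity
  refine h3.congr_deriv ?_
  ring

lemma hasDerivAt_F (j : ℕ) (r : ℝ) :
    HasDerivAt
      (fun x : ℝ => x ^ (2 * j + 1) * (1 + x ^ 2) * Real.sqrt (1 + x ^ 2) * gaussDensity x)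
      (((2 * (j : ℝ) + 1) * r ^ (2 * j) + (2 * (j : ℝ) + 3) * r ^ (2 * j + 2)
          - r ^ (2 * j + 4)) * Real.sqrt (1 + r ^ 2) * gaussDensity r) r := by
  have hpos : (0:ℝ) < 1 + r ^ 2 := by positivity
  have hp : HasDerivAt (fun x : ℝ => x ^ (2 * j + 1))
      (((2 * j + 1 : ℕ) : ℝ) * r ^ (2 * j)) r := by
    simpa using hasDerivAt_pow (2 * j + 1) r
  have hq : HasDerivAt (fun x : ℝ => 1 + x ^ 2) (2 * r) r := by
    simpa using ((hasDerivAt_pow 2 r).const_add 1)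
  have hs : HasDerivAt (fun x : ℝ => Real.sqrt (1 + x ^ 2))
      (1 / (2 * Real.sqrt (1 + r ^ 2)) * (2 * r)) r :=
    (Real.hasDerivAt_sqrt hpos.ne').comp r hq
  have hg := hasDerivAt_gauss r
  have hD := ((hp.mul hq).mul hs).mul hg
  refine hD.congr_deriv ?_
  symm
  simp only [Pi.mul_apply]
  have hs0 : (0:ℝ) < Real.sqrt (1 + r ^ 2) := Real.sqrt_pos.mpr hpos
  have hs2 : Real.sqrt (1 + r ^ 2) ^ 2 = 1 + r ^ 2 := Real.sq_sqrt hpos.le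
  set s := Real.sqrt (1 + r ^ 2)
  push_cast
  field_simp
  linear_combination (r ^ 2 * r ^ (2 * j) * gaussDensity r) * hs2

lemma iGauss_rec (j : ℕ) :
    iGauss (j + 2) = (2 * (j : ℝ) + 3) * iGauss (j + 1) + (2 * (j : ℝ) + 1) * iGauss j := by
  have hF : Integrable
      (fun x : ℝ => x ^ (2 * j + 1) * (1 + x ^ 2) * Real.sqrt (1 + x ^ 2) * gaussDensity x) := by
    have h := (integrable_aux (2 * j + 1)).add (integrable_aux (2 * j + 3))
    exact h.congr (by filter_upwards with x; simp only [Pi.add_apply]; ring)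
  have hF' : Integrable (fun x : ℝ =>
      ((2 * (j : ℝ) + 1) * x ^ (2 * j) + (2 * (j : ℝ) + 3) * x ^ (2 * j + 2)
        - x ^ (2 * j + 4)) * Real.sqrt (1 + x ^ 2) * gaussDensity x) := by
    have h := (((integrable_aux (2 * j)).const_mul (2 * (j : ℝ) + 1)).add
      ((integrable_aux (2 * j + 2)).const_mul (2 * (j : ℝ) + 3))).sub
      (integrable_aux (2 * j + 4))
    exact h.congr (by
      filter_upwards with x
      simp only [Pi.add_apply, Pi.sub_apply]
      ring)
  have h0 := integral_eq_zero_of_hasDerivAt_of_integrable (hasDerivAt_F j) hF' hF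
  have heq : (fun x : ℝ =>
      ((2 * (j : ℝ) + 1) * x ^ (2 * j) + (2 * (j : ℝ) + 3) * x ^ (2 * j + 2)
        - x ^ (2 * j + 4)) * Real.sqrt (1 + x ^ 2) * gaussDensity x)
      = fun x : ℝ =>
        ((2 * (j : ℝ) + 1) * (x ^ (2 * j) * Real.sqrt (1 + x ^ 2) * gaussDensity x)
          + (2 * (j : ℝ) + 3) * (x ^ (2 * (j + 1)) * Real.sqrt (1 + x ^ 2) * gaussDensity x))
        - x ^ (2 * (j + 2)) * Real.sqrt (1 + x ^ 2) * gaussDensity x := by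
    funext x; ring
  rw [heq] at h0
  have i0 : Integrable (fun x : ℝ =>
      (2 * (j : ℝ) + 1) * (x ^ (2 * j) * Real.sqrt (1 + x ^ 2) * gaussDensity x)) :=
    (integrable_aux (2 * j)).const_mul _
  have i1 : Integrable (fun x : ℝ =>
      (2 * (j : ℝ) + 3) * (x ^ (2 * (j + 1)) * Real.sqrt (1 + x ^ 2) * gaussDensity x)) :=
    (integrable_aux (2 * (j + 1))).const_mul _
  have isum : Integrable (fun x : ℝ =>
      (2 * (j : ℝ) + 1) * (x ^ (2 * j) * Real.sqrt (1 + x ^ 2) * gaussDensity x)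
        + (2 * (j : ℝ) + 3) * (x ^ (2 * (j + 1)) * Real.sqrt (1 + x ^ 2) * gaussDensity x)) :=
    i0.add i1
  rw [integral_sub isum (integrable_aux (2 * (j + 2))),
    integral_add i0 i1, integral_const_mul, integral_const_mul] at h0
  have e0 : iGauss j = ∫ x : ℝ, x ^ (2 * j) * Real.sqrt (1 + x ^ 2) * gaussDensity x := rfl
  have e1 : iGauss (j + 1)
      = ∫ x : ℝ, x ^ (2 * (j + 1)) * Real.sqrt (1 + x ^ 2) * gaussDensity x := rfl
  have e2 : iGauss (j + 2)
      = ∫ x : ℝ, x ^ (2 * (j + 2)) * Real.sqrt (1 + x ^ 2) * gaussDensity x := rfl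
  rw [← e0, ← e1, ← e2] at h0
  linarith

/-- Explicit expressions of `i₂, …, i₆` in terms of `i₀` and `i₁`. -/
theorem iGauss_values :
    iGauss 2 = iGauss 0 + 3 * iGauss 1 ∧
    iGauss 3 = 5 * iGauss 0 + 18 * iGauss 1 ∧
    iGauss 4 = 40 * iGauss 0 + 141 * iGauss 1 ∧
    iGauss 5 = 395 * iGauss 0 + 1395 * iGauss 1 ∧
    iGauss 6 = 4705 * iGauss 0 + 16614 * iGauss 1 := by
  have r0 := iGauss_rec 0
  have r1 := iGauss_rec 1
  have r2 := iGauss_rec 2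
  have r3 := iGauss_rec 3
  have r4 := iGauss_rec 4
  norm_num at r0 r1 r2 r3 r4
  refine ⟨by linarith, by linarith, by linarith, by linarith, by linarith⟩
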